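/- A C^k real function f on an open interval (a,b) is k-tone (all k-th divided differences at pairwise distinct points of (a,b) are nonnegative) if and only if f^{(k)}(x) ≥ 0 for all x ∈ (a,b). -/

import Mathlib

open Polynomial Set

lemma polyEval_contDiff (p : ℝ[X]) {n : WithTop ℕ∞} : ContDiff ℝ n fun x : ℝ => p.eval x := by
  induction p using Polynomial.induction_on' with
  | add p q hp hq => simpa [eval_add] using hp.add hq
  | monomial n a => simpa [eval_monomial] using contDiff_const.mul (contDiff_id.pow _)

lemma iteratedDeriv_polyEval (p : ℝ[X]) (n : ℕ) :
    iteratedDeriv n (fun x : ℝ => p.eval x) = fun x => (derivative^[n] p).eval x := by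
  induction n generalizing p with
  | zero => simp
  | succ n ih =>
    rw [iteratedDeriv_succ']
    have h : deriv (fun x : ℝ => p.eval x) = fun x => (derivative p).eval x := by
      funext x; exact Polynomial.deriv (p := p)
    rw [h, ih, Function.iterate_succ_apply]

lemma iteratedDerivWithin_of_isOpen' {s : Set ℝ} {f : ℝ → ℝ} (n : ℕ) (hs : IsOpen s) {x : ℝ}
    (hx : x ∈ s) : iteratedDerivWithin n f s x = iteratedDeriv n f x := by
  rw [iteratedDerivWithin_eq_iteratedFDerivWithin, iteratedDeriv_eq_iteratedFDeriv,
    iteratedFDerivWithin_of_isOpen n hs hx]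

lemma degree_linear_mul_lt {c : ℝ} {p : ℝ[X]} {n : ℕ} (hp : p.degree < (n : ℕ)) :
    ((X - C c) * p).degree < ((n + 1 : ℕ) : WithBot ℕ) := by
  rcases eq_or_ne p 0 with rfl | hp0
  · simpa using WithBot.bot_lt_coe (n+1)
  · rw [degree_mul, degree_X_sub_C, degree_eq_natDegree hp0]
    rw [← natDegree_lt_iff_degree_lt hp0] at hp
    exact_mod_cast by omega


noncomputable def divDiff (f : ℝ → ℝ) : (k : ℕ) → (Fin (k + 1) → ℝ) → ℝ
  | 0, x => f (x 0)
  | k + 1, x =>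
      (divDiff f k (fun i => x i.castSucc) - divDiff f k (fun i => x i.succ)) /
        (x 0 - x (Fin.last (k + 1)))


lemma divDiff_eq_coeff (f : ℝ → ℝ) : ∀ (k : ℕ) (x : Fin (k + 1) → ℝ), Function.Injective x →
    divDiff f k x = (Lagrange.interpolate (Finset.univ.image x) id f).coeff k := by
  intro k
  induction k with
  | zero =>
    intro x hx
    have h1 : (Finset.univ.image x) = {x 0} := by
      ext y
      simp only [Finset.mem_image, Finset.mem_univ, true_and, Finset.mem_singleton]
      constructor
      · rintro ⟨i, rfl⟩; rw [Fin.eq_zero i]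
      · rintro rfl; exact ⟨0, rfl⟩
    rw [h1, Lagrange.interpolate_singleton]
    show f (x 0) = _
    simp
  | succ k ih =>
    intro x hx
    set s : Finset ℝ := Finset.univ.image x with hs
    have hcard : s.card = k + 2 := by
      rw [hs, Finset.card_image_of_injective _ hx, Finset.card_univ, Fintype.card_fin]
    have hinj : Set.InjOn (id : ℝ → ℝ) s := Set.injOn_id _
    have h0l : (0 : Fin (k + 2)) ≠ Fin.last (k + 1) := by
      simp [Fin.ext_iff]
    have hne : x 0 ≠ x (Fin.last (k + 1)) := fun h => h0l (hx h)
    have hx0 : x 0 ∈ s := Finset.mem_image_of_mem x (Finset.mem_univ _)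
    have hxl : x (Fin.last (k + 1)) ∈ s := Finset.mem_image_of_mem x (Finset.mem_univ _)
    have hA : Finset.univ.image (fun i : Fin (k + 1) => x i.castSucc)
        = s.erase (x (Fin.last (k + 1))) := by
      ext y
      simp only [Finset.mem_image, Finset.mem_erase, Finset.mem_univ, true_and, hs]
      constructor
      · rintro ⟨i, rfl⟩
        exact ⟨fun h => (Fin.castSucc_lt_last i).ne (hx h), ⟨i.castSucc, rfl⟩⟩
      · rintro ⟨hy, i, rfl⟩
        have hine : i ≠ Fin.last (k + 1) := fun h => hy (by rw [h])
        rcases Fin.exists_castSucc_eq.mpr hine with ⟨j, rfl⟩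
        exact ⟨j, rfl⟩
    have hB : Finset.univ.image (fun i : Fin (k + 1) => x i.succ) = s.erase (x 0) := by
      ext y
      simp only [Finset.mem_image, Finset.mem_erase, Finset.mem_univ, true_and, hs]
      constructor
      · rintro ⟨i, rfl⟩
        exact ⟨fun h => (Fin.succ_ne_zero i) (hx h), ⟨i.succ, rfl⟩⟩
      · rintro ⟨hy, i, rfl⟩
        have hine : i ≠ 0 := fun h => hy (by rw [h])
        rcases Fin.eq_succ_of_ne_zero hine with ⟨j, rfl⟩
        exact ⟨j, rfl⟩
    set pA := Lagrange.interpolate (s.erase (x (Fin.last (k + 1)))) id f with hpA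
    set pB := Lagrange.interpolate (s.erase (x 0)) id f with hpB
    have hinjA : Set.InjOn (id : ℝ → ℝ) (s.erase (x (Fin.last (k + 1)))) := Set.injOn_id _
    have hinjB : Set.InjOn (id : ℝ → ℝ) (s.erase (x 0)) := Set.injOn_id _
    have hcardA : (s.erase (x (Fin.last (k + 1)))).card = k + 1 := by
      rw [Finset.card_erase_of_mem hxl, hcard]
      omega
    have hcardB : (s.erase (x 0)).card = k + 1 := by
      rw [Finset.card_erase_of_mem hx0, hcard]
      omega
    have hdegA : pA.degree < ((k + 1 : ℕ) : WithBot ℕ) := by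
      have := Lagrange.degree_interpolate_lt f hinjA
      rwa [hcardA] at this
    have hdegB : pB.degree < ((k + 1 : ℕ) : WithBot ℕ) := by
      have := Lagrange.degree_interpolate_lt f hinjB
      rwa [hcardB] at this
    set q : ℝ[X] := C (x 0 - x (Fin.last (k + 1)))⁻¹ *
      ((X - C (x (Fin.last (k + 1)))) * pA - (X - C (x 0)) * pB) with hq
    have hdegq : q.degree < s.card := by
      rw [hcard]
      calc q.degree ≤ ((X - C (x (Fin.last (k + 1)))) * pA - (X - C (x 0)) * pB).degree := by
            rw [hq, degree_mul]
            rcases le_or_gt (C (x 0 - x (Fin.last (k + 1)))⁻¹).degree 0 with h | h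
            · calc _ ≤ 0 + _ := add_le_add_left h _
                _ = _ := zero_add _
            · exact absurd (degree_C_le) (not_le.mpr h)
        _ < ((k + 2 : ℕ) : WithBot ℕ) :=
            lt_of_le_of_lt (degree_sub_le _ _)
              (max_lt (degree_linear_mul_lt hdegA) (degree_linear_mul_lt hdegB))
    have hqeval : ∀ y ∈ s, q.eval (id y) = f y := by
      intro y hy
      by_cases hyl : y = x (Fin.last (k + 1))
      · subst hyl
        have hmB : x (Fin.last (k + 1)) ∈ s.erase (x 0) :=
          Finset.mem_erase.mpr ⟨hne.symm, hy⟩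
        have hevB : pB.eval (x (Fin.last (k + 1))) = f (x (Fin.last (k + 1))) :=
          Lagrange.eval_interpolate_at_node f hinjB hmB
        simp only [hq, id_eq, eval_mul, eval_C, eval_sub, eval_X, hevB, sub_self, zero_mul,
          zero_sub]
        field_simp [sub_ne_zero.mpr hne]
        ring
      · by_cases hy0 : y = x 0
        · subst hy0
          have hmA : x 0 ∈ s.erase (x (Fin.last (k + 1))) := Finset.mem_erase.mpr ⟨hne, hy⟩
          have hevA : pA.eval (x 0) = f (x 0) := Lagrange.eval_interpolate_at_node f hinjA hmA
          simp only [hq, id_eq, eval_mul, eval_C, eval_sub, eval_X, hevA, sub_self, zero_mul,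
            sub_zero]
          field_simp [sub_ne_zero.mpr hne]
        · have hmA : y ∈ s.erase (x (Fin.last (k + 1))) := Finset.mem_erase.mpr ⟨hyl, hy⟩
          have hmB : y ∈ s.erase (x 0) := Finset.mem_erase.mpr ⟨hy0, hy⟩
          have hevA : pA.eval y = f y := Lagrange.eval_interpolate_at_node f hinjA hmA
          have hevB : pB.eval y = f y := Lagrange.eval_interpolate_at_node f hinjB hmB
          simp only [hq, id_eq, eval_mul, eval_C, eval_sub, eval_X, hevA, hevB]
          field_simp [sub_ne_zero.mpr hne]
          ring
    have hqi : q = Lagrange.interpolate s id f :=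
      Lagrange.eq_interpolate_of_eval_eq f hinj hdegq hqeval
    have hcoeffA : pA.coeff (k + 1) = 0 := coeff_eq_zero_of_degree_lt hdegA
    have hcoeffB : pB.coeff (k + 1) = 0 := coeff_eq_zero_of_degree_lt hdegB
    have hlincoeff : ∀ (c : ℝ) (p : ℝ[X]), p.coeff (k + 1) = 0 →
        ((X - C c) * p).coeff (k + 1) = p.coeff k := by
      intro c p hp
      rw [sub_mul, coeff_sub, coeff_X_mul, coeff_C_mul, hp, mul_zero, sub_zero]
    show (divDiff f k (fun i => x i.castSucc) - divDiff f k (fun i => x i.succ)) /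
        (x 0 - x (Fin.last (k + 1))) = _
    rw [← hqi]
    have hxA : Function.Injective (fun i : Fin (k + 1) => x i.castSucc) :=
      fun i j h => Fin.castSucc_injective _ (hx h)
    have hxB : Function.Injective (fun i : Fin (k + 1) => x i.succ) :=
      fun i j h => Fin.succ_injective _ (hx h)
    rw [ih _ hxA, ih _ hxB, hA, hB]
    rw [hq, coeff_C_mul, coeff_sub, hlincoeff _ _ hcoeffA, hlincoeff _ _ hcoeffB]
    rw [div_eq_mul_inv, mul_comm]

lemma divDiff_comp_perm (f : ℝ → ℝ) (k : ℕ) (x : Fin (k + 1) → ℝ) (hx : Function.Injective x)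
    (σ : Equiv.Perm (Fin (k + 1))) : divDiff f k (x ∘ σ) = divDiff f k x := by
  rw [divDiff_eq_coeff f k _ (hx.comp σ.injective), divDiff_eq_coeff f k x hx]
  have himg : Finset.univ.image (x ∘ σ) = Finset.univ.image x := by
    ext y
    simp only [Finset.mem_image, Finset.mem_univ, true_and, Function.comp_apply]
    constructor
    · rintro ⟨i, rfl⟩; exact ⟨σ i, rfl⟩
    · rintro ⟨i, rfl⟩; exact ⟨σ.symm i, by simp⟩
  rw [himg]


lemma iterated_rolle {a b : ℝ} : ∀ (n : ℕ) (g : ℝ → ℝ),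
    ContDiffOn ℝ (n : ℕ∞) g (Set.Ioo a b) →
    ∀ y : Fin (n + 1) → ℝ, StrictMono y → (∀ i, y i ∈ Set.Ioo a b) → (∀ i, g (y i) = 0) →
    ∃ ξ ∈ Set.Icc (y 0) (y (Fin.last n)), iteratedDerivWithin n g (Set.Ioo a b) ξ = 0 := by
  intro n
  induction n with
  | zero =>
    intro g hg y hy hmem hzero
    exact ⟨y 0, ⟨le_rfl, le_rfl⟩, by simpa [iteratedDerivWithin_zero] using hzero 0⟩
  | succ n ih =>
    intro g hg y hy hmem hzero
    have hIccSub : ∀ i : Fin (n + 1), Set.Icc (y i.castSucc) (y i.succ) ⊆ Set.Ioo a b := fun i =>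
      Set.Icc_subset_Ioo (hmem i.castSucc).1 (hmem i.succ).2
    have hlt : ∀ i : Fin (n + 1), y i.castSucc < y i.succ := fun i => hy (Fin.castSucc_lt_succ (i := i))
    have hrolle : ∀ i : Fin (n + 1), ∃ c ∈ Set.Ioo (y i.castSucc) (y i.succ), deriv g c = 0 :=
      fun i => exists_deriv_eq_zero (hlt i) (hg.continuousOn.mono (hIccSub i))
        ((hzero i.castSucc).trans (hzero i.succ).symm)
    choose z hz1 hz2 using hrolle
    have hzmem : ∀ i, z i ∈ Set.Ioo a b := fun i =>
      hIccSub i (Set.Ioo_subset_Icc_self (hz1 i))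
    have hzmono : StrictMono z := by
      intro i j hij
      have h1 : z i < y i.succ := (hz1 i).2
      have h2 : y j.castSucc < z j := (hz1 j).1
      have h3 : y i.succ ≤ y j.castSucc := hy.monotone (by
        rw [Fin.le_def]
        simp only [Fin.val_succ, Fin.coe_castSucc]
        exact hij)
      linarith
    have hg' : ContDiffOn ℝ (n : ℕ∞) (derivWithin g (Set.Ioo a b)) (Set.Ioo a b) :=
      hg.derivWithin isOpen_Ioo.uniqueDiffOn (by norm_cast)
    have hz0 : ∀ i, derivWithin g (Set.Ioo a b) (z i) = 0 := fun i => by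
      rw [derivWithin_of_isOpen isOpen_Ioo (hzmem i)]; exact hz2 i
    obtain ⟨ξ, hξIcc, hξ0⟩ := ih _ hg' z hzmono hzmem hz0
    have hξIoo : ξ ∈ Set.Ioo a b := Set.Icc_subset_Ioo (hzmem 0).1 (hzmem (Fin.last n)).2 hξIcc
    refine ⟨ξ, ⟨?_, ?_⟩, ?_⟩
    · have : y ((0 : Fin (n + 1)).castSucc) < z 0 := (hz1 0).1
      rw [Fin.castSucc_zero] at this
      exact le_trans this.le hξIcc.1
    · have : z (Fin.last n) < y ((Fin.last n).succ) := (hz1 (Fin.last n)).2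
      rw [Fin.succ_last] at this
      exact le_trans hξIcc.2 this.le
    · rw [iteratedDerivWithin_succ']
      exact hξ0

lemma divDiff_mvt {f : ℝ → ℝ} {a b : ℝ} {k : ℕ} (hf : ContDiffOn ℝ (k : ℕ∞) f (Set.Ioo a b))
    (x : Fin (k + 1) → ℝ) (hx : StrictMono x) (hmem : ∀ i, x i ∈ Set.Ioo a b) :
    ∃ ξ ∈ Set.Icc (x 0) (x (Fin.last k)), ξ ∈ Set.Ioo a b ∧
      divDiff f k x * (Nat.factorial k : ℝ) = iteratedDerivWithin k f (Set.Ioo a b) ξ := by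
  set s := Finset.univ.image x with hs
  set p := Lagrange.interpolate s id f with hp
  have hinj : Set.InjOn (id : ℝ → ℝ) s := Set.injOn_id _
  have hcard : s.card = k + 1 := by
    rw [hs, Finset.card_image_of_injective _ hx.injective, Finset.card_univ, Fintype.card_fin]
  have hpcd : ContDiffOn ℝ (k : ℕ∞) (fun t : ℝ => p.eval t) (Set.Ioo a b) :=
    (polyEval_contDiff p).contDiffOn
  have hg : ContDiffOn ℝ (k : ℕ∞) (f - fun t : ℝ => p.eval t) (Set.Ioo a b) := hf.sub hpcd
  have hzero : ∀ i, (f - fun t : ℝ => p.eval t) (x i) = 0 := fun i => by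
    have h1 : p.eval (id (x i)) = f (x i) :=
      Lagrange.eval_interpolate_at_node f hinj (Finset.mem_image_of_mem x (Finset.mem_univ i))
    simp only [Pi.sub_apply, id_eq] at h1 ⊢
    rw [h1, sub_self]
  obtain ⟨ξ, hIcc, h0⟩ := iterated_rolle k _ hg x hx hmem hzero
  have hξIoo : ξ ∈ Set.Ioo a b := Set.Icc_subset_Ioo (hmem 0).1 (hmem (Fin.last k)).2 hIcc
  refine ⟨ξ, hIcc, hξIoo, ?_⟩
  rw [iteratedDerivWithin_sub hξIoo isOpen_Ioo.uniqueDiffOn (hf ξ hξIoo) (hpcd ξ hξIoo)] at h0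
  have hdeg : p.degree < ((k + 1 : ℕ) : WithBot ℕ) := by
    have := Lagrange.degree_interpolate_lt f hinj
    rwa [hcard] at this
  have hnd : p.natDegree ≤ k := by
    rcases eq_or_ne p 0 with h | hp0
    · simp [h]
    · have := (natDegree_lt_iff_degree_lt hp0).mpr hdeg
      omega
  have hpoly : iteratedDerivWithin k (fun t : ℝ => p.eval t) (Set.Ioo a b) ξ
      = (Nat.factorial k : ℝ) * p.coeff k := by
    rw [iteratedDerivWithin_of_isOpen' k isOpen_Ioo hξIoo, iteratedDeriv_polyEval]
    have hnd0 : (derivative^[k] p).natDegree ≤ 0 := by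
      have := natDegree_iterate_derivative p k
      omega
    rw [eq_C_of_natDegree_le_zero hnd0]
    simp [coeff_iterate_derivative, Nat.descFactorial_self, nsmul_eq_mul]
  rw [hpoly] at h0
  rw [divDiff_eq_coeff f k x hx.injective, ← hs, ← hp]
  linarith

theorem ktone_iff_iteratedDeriv_nonneg (f : ℝ → ℝ) (a b : ℝ) (hab : a < b) (k : ℕ)
    (hf : ContDiffOn ℝ (k : ℕ∞) f (Set.Ioo a b)) :
    (∀ x : Fin (k + 1) → ℝ, Function.Injective x →
      (∀ i, x i ∈ Set.Ioo a b) → 0 ≤ divDiff f k x) ↔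
    ∀ x ∈ Set.Ioo a b, 0 ≤ iteratedDerivWithin k f (Set.Ioo a b) x := by
  have hfac : (0 : ℝ) < (Nat.factorial k : ℝ) := by exact_mod_cast Nat.factorial_pos k
  constructor
  · intro h x0 hx0
    by_contra hneg
    push_neg at hneg
    set F := iteratedDerivWithin k f (Set.Ioo a b) with hF
    have hcont : ContinuousOn F (Set.Ioo a b) :=
      hf.continuousOn_iteratedDerivWithin le_rfl isOpen_Ioo.uniqueDiffOn
    have hca : ContinuousAt F x0 :=
      hcont.continuousAt (isOpen_Ioo.mem_nhds hx0)
    have hev : ∀ᶠ y in nhds x0, F y < 0 ∧ y ∈ Set.Ioo a b :=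
      (hca.eventually_lt_const hneg).and (isOpen_Ioo.eventually_mem hx0)
    obtain ⟨ε, hε, hball⟩ := Metric.eventually_nhds_iff_ball.mp hev
    set δ := ε / (2 * ((k : ℝ) + 1)) with hδ
    have hδpos : 0 < δ := by positivity
    have hkδ : (k : ℝ) * δ < ε := by
      rw [hδ, mul_div_assoc']
      rw [div_lt_iff₀ (by positivity)]
      nlinarith
    set y : Fin (k + 1) → ℝ := fun i => x0 + i * δ with hy
    have hyball : ∀ i, y i ∈ Metric.ball x0 ε := by
      intro i
      simp only [hy, Metric.mem_ball, Real.dist_eq, add_sub_cancel_left]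
      rw [abs_of_nonneg (by positivity)]
      have hik : (i : ℝ) ≤ k := by exact_mod_cast Fin.is_le i
      calc (i : ℝ) * δ ≤ k * δ := by nlinarith
        _ < ε := hkδ
    have hymono : StrictMono y := by
      intro i j hij
      simp only [hy]
      have : (i : ℝ) < j := by exact_mod_cast hij
      have := mul_lt_mul_of_pos_right this hδpos
      linarith
    have hymem : ∀ i, y i ∈ Set.Ioo a b := fun i => (hball _ (hyball i)).2
    obtain ⟨ξ, hξIcc, hξIoo, heq⟩ := divDiff_mvt hf y hymono hymem
    have hy0 : y 0 = x0 := by simp [hy]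
    have hξball : ξ ∈ Metric.ball x0 ε := by
      simp only [Metric.mem_ball, Real.dist_eq]
      have h1 : x0 ≤ ξ := hy0 ▸ hξIcc.1
      have h2 : ξ ≤ x0 + k * δ := by
        have := hξIcc.2
        simp only [hy, Fin.val_last] at this
        exact_mod_cast this
      rw [abs_of_nonneg (by linarith)]
      linarith
    have hFξ : F ξ < 0 := (hball _ hξball).1
    have hd : 0 ≤ divDiff f k y := h y hymono.injective hymem
    nlinarith
  · intro h x hxinj hxmem
    set σ := Tuple.sort x with hσ
    have hmono : Monotone (x ∘ σ) := Tuple.monotone_sort x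
    have hsm : StrictMono (x ∘ σ) :=
      hmono.strictMono_of_injective (hxinj.comp σ.injective)
    obtain ⟨ξ, _, hξIoo, heq⟩ := divDiff_mvt hf (x ∘ σ) hsm (fun i => hxmem (σ i))
    have h1 : 0 ≤ divDiff f k (x ∘ σ) * (Nat.factorial k : ℝ) := heq ▸ h ξ hξIoo
    have h2 : 0 ≤ divDiff f k (x ∘ σ) := by
      by_contra hc
      push_neg at hc
      nlinarith
    rwa [divDiff_comp_perm f k x hxinj σ] at h2
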